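/- arXiv:1802.07440 — 2 statements merged into one kernel-verified Lean document; each statement's English description precedes it below -/
import Mathlib

section
/- Let G = (V,E) be a graph with strict preference lists and let G' be the associated bidirected instance. Then G admits a strongly dominant matching if and only if G' admits a stable matching. -/
open scoped Classical

/-- A roommates instance: a (finite) graph `(V, adj)` together with a raw preference
relation: `pref u v w` means vertex `u` strictly prefers its neighbor `v` to its
neighbor `w`. -/
structure RoommatesInstance (V : Type) where
  adj : V → V → Prop
  adj_symm : ∀ u v, adj u v → adj v u
  adj_irrefl : ∀ u, ¬ adj u u
  pref : V → V → V → Prop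

namespace RoommatesInstance

variable {V : Type}

/-- The preference relation of each vertex is a strict linear order on its neighbors. -/
def StrictPrefs (G : RoommatesInstance V) : Prop :=
  (∀ u v w, G.pref u v w → G.adj u v ∧ G.adj u w) ∧
  (∀ u v w x, G.pref u v w → G.pref u w x → G.pref u v x) ∧
  (∀ u v w, G.pref u v w → ¬ G.pref u w v) ∧
  (∀ u v w, G.adj u v → G.adj u w → v ≠ w → G.pref u v w ∨ G.pref u w v)

/-- A matching, encoded by the partner function of the corresponding perfect matching
`M̃` of `G̃` (the graph `G` with a self-loop added at every vertex): `m u = u` means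
that `u` is unmatched in `M`, i.e. matched to itself along its self-loop in `M̃`. -/
structure Matching (G : RoommatesInstance V) where
  m : V → V
  invol : ∀ u, m (m u) = u
  adj_of_ne : ∀ u, m u ≠ u → G.adj u (m u)

variable (G : RoommatesInstance V)

/-- `u` considers `v` strictly better than `w`, where each of `v`, `w` is either a
neighbor of `u` or `u` itself (`u` itself stands for being unmatched, which every
vertex ranks below all of its neighbors). -/
def Better (u v w : V) : Prop :=
  (w = u ∧ v ≠ u) ∨ (v ≠ u ∧ w ≠ u ∧ G.pref u v w)

/-- vertex `u` prefers matching `M` to matching `M'` -/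
def Prefers (M M' : G.Matching) (u : V) : Prop :=
  G.Better u (M.m u) (M'.m u)

/-- `φ(M,M')`: the number of vertices preferring `M` to `M'` -/
noncomputable def phi [Fintype V] (M M' : G.Matching) : ℕ :=
  (Finset.univ.filter fun u => G.Prefers M M' u).card

/-- `Δ(M,M') = φ(M,M') - φ(M',M)` -/
noncomputable def delta [Fintype V] (M M' : G.Matching) : ℤ :=
  (G.phi M M' : ℤ) - (G.phi M' M : ℤ)

/-- a matching `M` is popular if it never loses a head-to-head election -/
def Popular [Fintype V] (M : G.Matching) : Prop :=
  ∀ M' : G.Matching, 0 ≤ G.delta M M'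

/-- `(u,v)` is a blocking edge to `M`: both endpoints prefer each other to their
assignments in `M̃`. -/
def Blocks (M : G.Matching) (u v : V) : Prop :=
  G.adj u v ∧ G.Better u v (M.m u) ∧ G.Better v u (M.m v)

/-- `(u,v)` is a negative edge to `M`: both endpoints prefer their assignments in `M̃`
to each other. -/
def Negative (M : G.Matching) (u v : V) : Prop :=
  G.adj u v ∧ G.Better u (M.m u) v ∧ G.Better v (M.m v) u

/-- `cost_M` on the edges of `G̃`: `cost_M(u,v) = 2` for a blocking edge, `-2` for a
negative edge, `0` otherwise; `cost_M(u,u) = 0` if `u` is unmatched in `M` and `-1`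
otherwise. -/
noncomputable def cost (M : G.Matching) (u v : V) : ℤ :=
  if u = v then (if M.m u = u then 0 else -1)
  else if G.Blocks M u v then 2
  else if G.Negative M u v then -2
  else 0

/-- a stable matching: no blocking edge -/
def Stable (M : G.Matching) : Prop := ∀ u v, ¬ G.Blocks M u v

/-- the number of edges of a matching -/
noncomputable def msize [Fintype V] (M : G.Matching) : ℕ :=
  (Finset.univ.filter fun u => M.m u ≠ u).card / 2

theorem cost_comm (M : G.Matching) (u v : V) : G.cost M u v = G.cost M v u := by
  unfold cost
  rcases eq_or_ne u v with rfl | huv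
  · rfl
  · rw [if_neg huv, if_neg (Ne.symm huv)]
    have hb : G.Blocks M u v ↔ G.Blocks M v u :=
      ⟨fun ⟨h1, h2, h3⟩ => ⟨G.adj_symm _ _ h1, h3, h2⟩,
       fun ⟨h1, h2, h3⟩ => ⟨G.adj_symm _ _ h1, h3, h2⟩⟩
    have hn : G.Negative M u v ↔ G.Negative M v u :=
      ⟨fun ⟨h1, h2, h3⟩ => ⟨G.adj_symm _ _ h1, h3, h2⟩,
       fun ⟨h1, h2, h3⟩ => ⟨G.adj_symm _ _ h1, h3, h2⟩⟩
    simp only [hb, hn]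

end RoommatesInstance

namespace RoommatesInstance

variable {V : Type} (G : RoommatesInstance V)

/-- `M` is strongly dominant: there is a partition `(L,R)` of `V` such that
`M ⊆ L × R`, `M` matches all of `R`, every blocking edge to `M` lies in `R × R`,
and every edge of `G` inside `L × L` is negative to `M`. -/
def StronglyDominant (M : G.Matching) : Prop :=
  ∃ L R : Set V,
    (∀ v, (v ∈ L ∨ v ∈ R) ∧ ¬ (v ∈ L ∧ v ∈ R)) ∧
    (∀ u, M.m u ≠ u → (u ∈ L ↔ M.m u ∈ R)) ∧
    (∀ u ∈ R, M.m u ≠ u) ∧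
    (∀ u v, G.Blocks M u v → u ∈ R ∧ v ∈ R) ∧
    (∀ u v, G.adj u v → u ∈ L → v ∈ L → G.Negative M u v)

end RoommatesInstance

namespace RoommatesInstance

variable {V : Type} (G : RoommatesInstance V)

/-- A matching `M'` in the bidirected instance `G'` associated with `G`.  `G'` has the
same vertex set as `G` and, for each edge `(u,v)` of `G`, the two parallel edges
`(u⁺,v⁻)` and `(u⁻,v⁺)`.  We record, for each vertex `u`, its partner together with
the sign of the copy of the partner that `u` is matched to: `p u = some (v, s)` means
that `u` is matched to `v^s` (`s = true` is `+`, `s = false` is `-`), i.e. the edge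
`(u^{¬s}, v^s)` of `G'` is in `M'`. -/
structure BidirMatching where
  p : V → Option (V × Bool)
  mem_adj : ∀ u v s, p u = some (v, s) → G.adj u v
  consistent : ∀ u v s, p u = some (v, s) → p v = some (u, !s)

/-- The edge `(u⁺,v⁻)` belongs to `M'` iff `u` is matched to `v⁻`. -/
def BidirMatching.hasEdge {G : RoommatesInstance V} (M' : G.BidirMatching) (u v : V) : Prop :=
  M'.p u = some (v, false)

/-- In `G'`, if `u`'s preference list in `G` is `v_1 ≻ ⋯ ≻ v_k`, then `u`'s list in
`G'` is `v_1⁻ ≻ ⋯ ≻ v_k⁻ ≻ v_1⁺ ≻ ⋯ ≻ v_k⁺`.  `M'` is stable in `G'` if for every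
edge `(u⁺,v⁻) ∉ M'`, either `u` is matched to a neighbor it ranks better than `v⁻`,
or `v` is matched to a neighbor it ranks better than `u⁺`. -/
def BidirStable (M' : G.BidirMatching) : Prop :=
  ∀ u v, G.adj u v → ¬ M'.hasEdge u v →
    (∃ w, M'.p u = some (w, false) ∧ G.pref u w v) ∨
    (∃ w t, M'.p v = some (w, t) ∧ (t = false ∨ (t = true ∧ G.pref v w u)))

/-- `M` is the projection of `M'`: `M = {(u,v) : (u⁺,v⁻) ∈ M' or (u⁻,v⁺) ∈ M'}`. -/
def IsProjection (M' : G.BidirMatching) (M : G.Matching) : Prop :=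
  ∀ u, M.m u = ((M'.p u).map Prod.fst).getD u

end RoommatesInstance

namespace RoommatesInstance

variable {V : Type} {G : RoommatesInstance V}

lemma better_asymm (hG : G.StrictPrefs) {u v w : V} (h1 : G.Better u v w)
    (h2 : G.Better u w v) : False := by
  rcases h1 with ⟨hw, hv⟩ | ⟨hv, hw, hp⟩
  · rcases h2 with ⟨hv2, _⟩ | ⟨hw2, _, _⟩
    · exact hv hv2
    · exact hw2 hw
  · rcases h2 with ⟨hv2, _⟩ | ⟨_, _, hp2⟩
    · exact hv hv2
    · exact hG.2.2.1 _ _ _ hp hp2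

lemma ne_of_adj {u v : V} (h : G.adj u v) : u ≠ v := by
  rintro rfl; exact G.adj_irrefl u h

end RoommatesInstance

open RoommatesInstance in
/-- `G` admits a strongly dominant matching iff the bidirected
instance `G'` admits a stable matching. -/
theorem stronglyDominant_iff_bidirStable {V : Type} [Fintype V]
    (G : RoommatesInstance V) (hG : G.StrictPrefs) :
    (∃ M : G.Matching, G.StronglyDominant M) ↔
      ∃ M' : G.BidirMatching, G.BidirStable M' := by
  constructor
  · rintro ⟨M, L, R, hpart, hLR, hRm, hblocks, hneg⟩
    set pf : V → Option (V × Bool) :=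
      fun u => if h : M.m u = u then none else some (M.m u, if u ∈ L then true else false)
      with hpf
    have psome : ∀ u, M.m u ≠ u → pf u = some (M.m u, if u ∈ L then true else false) := by
      intro u hu; rw [hpf]; exact dif_neg hu
    have pinv : ∀ u v s, pf u = some (v, s) →
        M.m u ≠ u ∧ v = M.m u ∧ s = (if u ∈ L then true else false) := by
      intro u v s h
      by_cases hu : M.m u = u
      · rw [hpf] at h; simp [hu] at h
      · rw [psome u hu, Option.some_inj, Prod.mk.injEq] at h
        exact ⟨hu, h.1.symm, h.2.symm⟩
    refine ⟨⟨pf, ?_, ?_⟩, ?_⟩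
    · intro u v s h
      obtain ⟨hu, rfl, -⟩ := pinv u v s h
      exact M.adj_of_ne u hu
    · intro u v s h
      obtain ⟨hu, rfl, rfl⟩ := pinv u v s h
      have hv : M.m (M.m u) ≠ M.m u := by rw [M.invol]; exact fun h => hu h.symm
      rw [psome (M.m u) hv, M.invol]
      by_cases hL : u ∈ L
      · have hR : M.m u ∈ R := (hLR u hu).1 hL
        have : M.m u ∉ L := fun h => (hpart (M.m u)).2 ⟨h, hR⟩
        simp [hL, this]
      · have hR : u ∈ R := ((hpart u).1).resolve_left hL
        have : M.m u ∈ L := (hLR (M.m u) hv).2 (by rw [M.invol]; exact hR)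
        simp [hL, this]
    · -- stability
      intro a b hadj hne
      have hab : a ≠ b := ne_of_adj hadj
      have hne' : ¬ (M.m a = b ∧ a ∉ L) := by
        rintro ⟨h1, h2⟩
        apply hne
        have ha : M.m a ≠ a := by rw [h1]; exact fun h => hab h.symm
        show pf a = some (b, false)
        rw [psome a ha, h1, if_neg h2]
      by_cases hbL : b ∈ L
      · -- b in L
        by_cases hbet : G.Better b (M.m b) a
        · have hbm : M.m b ≠ b := by
            rcases hbet with ⟨_, h2⟩ | ⟨h2, _, _⟩ <;> exact h2
          refine Or.inr ⟨M.m b, true, ?_, Or.inr ⟨rfl, ?_⟩⟩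
          · show pf b = _
            rw [psome b hbm, if_pos hbL]
          · rcases hbet with ⟨h1, _⟩ | ⟨_, _, h3⟩
            · exact absurd h1 hab
            · exact h3
        · have hbet2 : G.Better b a (M.m b) := by
            by_cases hbm : M.m b = b
            · rw [hbm]; exact Or.inl ⟨rfl, hab⟩
            · have hmba : M.m b ≠ a := by
                intro h
                have hma : M.m a = b := by rw [← h, M.invol]
                have haL : a ∈ L := by
                  by_contra hc; exact hne' ⟨hma, hc⟩
                have : M.m a ∈ R := (hLR a (by rw [hma]; exact Ne.symm hab)).1 haL
                rw [hma] at this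
                exact (hpart b).2 ⟨hbL, this⟩
              have := hG.2.2.2 b (M.m b) a (M.adj_of_ne b hbm) (G.adj_symm _ _ hadj) hmba
              rcases this with h | h
              · exact absurd (Or.inr ⟨hbm, hab, h⟩) hbet
              · exact Or.inr ⟨hab, hbm, h⟩
          have haR : a ∉ L := by
            intro haL
            have := hneg a b hadj haL hbL
            exact better_asymm hG this.2.2 hbet2
          have ham : M.m a ≠ a := hRm a (((hpart a).1).resolve_left haR)
          have hmab : M.m a ≠ b := fun h => hne' ⟨h, haR⟩
          have : G.pref a (M.m a) b := by
            rcases hG.2.2.2 a (M.m a) b (M.adj_of_ne a ham) hadj hmab with h | h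
            · exact h
            · exfalso
              have hblk : G.Blocks M a b := ⟨hadj, Or.inr ⟨Ne.symm hab, ham, h⟩, hbet2⟩
              exact (hpart b).2 ⟨hbL, (hblocks a b hblk).2⟩
          exact Or.inl ⟨M.m a, by show pf a = _; rw [psome a ham, if_neg haR], this⟩
      · have hbR : b ∈ R := ((hpart b).1).resolve_left hbL
        have hbm : M.m b ≠ b := hRm b hbR
        exact Or.inr ⟨M.m b, false, by show pf b = _; rw [psome b hbm, if_neg hbL], Or.inl rfl⟩
  · rintro ⟨M', hst⟩
    classical
    -- projected matching
    refine ⟨⟨fun u => ((M'.p u).map Prod.fst).getD u, ?_, ?_⟩, ?_⟩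
    · intro u
      cases hp : M'.p u with
      | none => simp [hp]
      | some vs =>
        obtain ⟨v, s⟩ := vs
        have := M'.consistent u v s hp
        simp [hp, this]
    · intro u hu
      cases hp : M'.p u with
      | none => simp [hp] at hu
      | some vs =>
        obtain ⟨v, s⟩ := vs
        simp only [hp, Option.map_some, Option.getD_some]
        exact M'.mem_adj u v s hp
    · -- strongly dominant
      set m : V → V := fun u => ((M'.p u).map Prod.fst).getD u with hm
      have hmval : ∀ u v s, M'.p u = some (v, s) → m u = v := by
        intro u v s h; rw [hm]; simp [h]
      have hmnone : ∀ u, M'.p u = none → m u = u := by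
        intro u h; rw [hm]; simp [h]
      have hpne : ∀ u v s, M'.p u = some (v, s) → v ≠ u := by
        intro u v s h
        exact fun hvu => (ne_of_adj (M'.mem_adj u v s h)) hvu.symm
      refine ⟨{u | ∀ v s, M'.p u = some (v, s) → s = true},
              {u | ∃ v, M'.p u = some (v, false)}, ?_, ?_, ?_, ?_, ?_⟩
      · intro u
        constructor
        · cases hp : M'.p u with
          | none => exact Or.inl (fun v s h => by rw [hp] at h; cases h)
          | some vs =>
            obtain ⟨v, s⟩ := vs
            cases s with
            | false => exact Or.inr ⟨v, hp⟩
            | true =>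
              refine Or.inl (fun v' s' h => ?_)
              rw [hp] at h
              exact (Prod.mk.injEq _ _ _ _ ▸ Option.some_inj.mp h).2.symm
        · rintro ⟨hL, v, hR⟩
          exact Bool.false_ne_true (hL v false hR)
      · intro u hu
        cases hp : M'.p u with
        | none => exact absurd (hmnone u hp) hu
        | some vs =>
          obtain ⟨v, s⟩ := vs
          have hc := M'.consistent u v s hp
          have hmu : m u = v := hmval u v s hp
          show (∀ v' s', M'.p u = some (v', s') → s' = true) ↔
            ∃ w, M'.p (m u) = some (w, false)
          rw [hmu]
          cases s with
          | true =>
            constructor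
            · intro _
              exact ⟨u, hc⟩
            · intro _ v' s' h
              rw [hp] at h
              exact (Prod.mk.injEq _ _ _ _ ▸ Option.some_inj.mp h).2.symm
          | false =>
            constructor
            · intro hL
              exact absurd (hL v false hp) Bool.false_ne_true
            · rintro ⟨w, hw⟩
              rw [hc] at hw
              simp at hw
      · rintro u ⟨v, hp⟩
        show m u ≠ u
        rw [hmval u v false hp]
        exact hpne u v false hp
      · have key : ∀ a b, G.adj a b → G.Better a b (m a) → G.Better b a (m b) →
            a ∈ {u | ∃ v, M'.p u = some (v, false)} := by
          intro a b hadj hba hbb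
          have hab : a ≠ b := ne_of_adj hadj
          have hnE : ¬ M'.hasEdge b a := by
            intro hE
            have : m b = a := hmval b a false hE
            rw [this] at hbb
            rcases hbb with ⟨h1, h2⟩ | ⟨h1, _, h3⟩
            · exact h2 h1
            · exact hG.2.2.1 _ _ _ h3 h3
          rcases hst b a (G.adj_symm _ _ hadj) hnE with ⟨w, hw, hpref⟩ | ⟨w, t, hw, hc⟩
          · exfalso
            have hmb : m b = w := hmval b w false hw
            rw [hmb] at hbb
            rcases hbb with ⟨h1, _⟩ | ⟨_, _, h3⟩
            · exact hpne b w false hw h1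
            · exact hG.2.2.1 _ _ _ h3 hpref
          · rcases hc with rfl | ⟨rfl, hpref⟩
            · exact ⟨w, hw⟩
            · exfalso
              have hma : m a = w := hmval a w true hw
              rw [hma] at hba
              rcases hba with ⟨h1, _⟩ | ⟨_, _, h3⟩
              · exact hpne a w true hw h1
              · exact hG.2.2.1 _ _ _ h3 hpref
        rintro u v ⟨hadj, hbu, hbv⟩
        exact ⟨key u v hadj hbu hbv, key v u (G.adj_symm _ _ hadj) hbv hbu⟩
      · have key2 : ∀ a b, G.adj a b → (∀ v s, M'.p a = some (v, s) → s = true) →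
            (∀ v s, M'.p b = some (v, s) → s = true) → G.Better b (m b) a := by
          intro a b hadj haL hbL
          have hab : a ≠ b := ne_of_adj hadj
          have hnE : ¬ M'.hasEdge a b := by
            intro hE
            exact Bool.false_ne_true (haL b false hE)
          rcases hst a b hadj hnE with ⟨w, hw, _⟩ | ⟨w, t, hw, hc⟩
          · exact absurd (haL w false hw) Bool.false_ne_true
          · rcases hc with rfl | ⟨rfl, hpref⟩
            · exact absurd (hbL w false hw) Bool.false_ne_true
            · rw [hmval b w true hw]
              exact Or.inr ⟨hpne b w true hw, hab, hpref⟩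
        intro a b hadj haL hbL
        exact ⟨hadj, key2 b a (G.adj_symm _ _ hadj) hbL haL, key2 a b hadj haL hbL⟩
end

section
/- Let H = ([n_H], E_H) be a graph and G the roommates instance constructed from H as described. For every popular matching M in G, the set C = {i ∈ [n_H] : (a_i,b_i) ∈ M} is a vertex cover of H. -/
open scoped Classical

/-! ## The roommates instance `G` constructed from a vertex-cover instance `H` -/

/-- The vertex set of the roommates instance `G` built from a graph `H` on `Fin n`:
vertices `a_i, b_i, c_i, d_i` for every vertex `i` of `H`, and a vertex
`u^e_i = U i j` for every edge `e = (i,j)` of `H` (so `U i j` is the vertex of the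
edge `{i,j}` associated with endpoint `i`; for non-adjacent pairs `(i,j)` the vertex
`U i j` is isolated, hence irrelevant). -/
inductive GV (n : ℕ) where
  | A (i : Fin n) | B (i : Fin n) | C (i : Fin n) | D (i : Fin n) | U (i j : Fin n)
  deriving DecidableEq, Fintype

variable {n : ℕ}

/-- The edges of `G` (listed in one direction each):
`a_i` is adjacent to `b_i, c_i, d_i`; `b_i` is adjacent to `c_i` and to `u^e_i` for
every edge `e` of `H` incident to `i`; and `u^e_i` is adjacent to `u^e_j` for every
edge `e = (i,j)` of `H`. -/
def grel (H : SimpleGraph (Fin n)) : GV n → GV n → Prop := fun x y =>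
  (∃ i, x = GV.A i ∧ (y = GV.B i ∨ y = GV.C i ∨ y = GV.D i)) ∨
  (∃ i, x = GV.B i ∧ y = GV.C i) ∨
  (∃ i j, x = GV.B i ∧ y = GV.U i j ∧ H.Adj i j) ∨
  (∃ i j, x = GV.U i j ∧ y = GV.U j i ∧ H.Adj i j)

/-- Ranks encoding the preference lists of `G` (lower rank = more preferred):
`a_i : b_i ≻ c_i ≻ d_i`;  `b_i : a_i ≻ u^{e_1}_i ≻ ⋯ ≻ u^{e_k}_i ≻ c_i`
(the `u^e_i`'s ordered by the index of the other endpoint of `e`);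
`c_i : a_i ≻ b_i`;  `d_i : a_i`;  `u^e_i : u^e_j ≻ b_i`. -/
def grank : GV n → GV n → ℕ := fun x y =>
  match x, y with
  | GV.A _, GV.B _ => 0
  | GV.A _, GV.C _ => 1
  | GV.A _, GV.D _ => 2
  | GV.B _, GV.A _ => 0
  | GV.B _, GV.U _ k => 1 + k.val
  | GV.B _, GV.C _ => 1 + n
  | GV.C _, GV.A _ => 0
  | GV.C _, GV.B _ => 1
  | GV.D _, GV.A _ => 0
  | GV.U _ _, GV.U _ _ => 0
  | GV.U _ _, GV.B _ => 1
  | _, _ => 0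

/-- The roommates instance `G` constructed from the vertex cover instance `H`. -/
def GofH (H : SimpleGraph (Fin n)) : RoommatesInstance (GV n) where
  adj x y := x ≠ y ∧ (grel H x y ∨ grel H y x)
  adj_symm := fun _ _ h => ⟨h.1.symm, h.2.symm⟩
  adj_irrefl := fun _ h => h.1 rfl
  pref u v w :=
    (u ≠ v ∧ (grel H u v ∨ grel H v u)) ∧ (u ≠ w ∧ (grel H u w ∨ grel H w u)) ∧
      grank u v < grank u w

section Helpers

open RoommatesInstance

variable {n : ℕ} {H : SimpleGraph (Fin n)}

lemma better_irrefl (u v : GV n) : ¬ (GofH H).Better u v v := by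
  rintro (⟨h1, h2⟩ | ⟨h1, h2, h3⟩)
  · exact h2 h1
  · exact lt_irrefl _ h3.2.2

lemma better_asymm {u v w : GV n} (h : (GofH H).Better u v w) :
    ¬ (GofH H).Better u w v := by
  rintro (⟨hv, hw⟩ | ⟨hw, hv, hp⟩)
  · rcases h with ⟨h1, h2⟩ | ⟨h1, h2, h3⟩
    · exact h2 hv
    · exact h1 hv
  · rcases h with ⟨h1, h2⟩ | ⟨h1, h2, h3⟩
    · exact hw h1
    · exact lt_asymm h3.2.2 hp.2.2

lemma better_unmatched {u v : GV n} (h : v ≠ u) : (GofH H).Better u v u :=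
  Or.inl ⟨rfl, h⟩

lemma mkBetter {u v w : GV n} (hv : (GofH H).adj u v) (hw : (GofH H).adj u w)
    (hr : grank u v < grank u w) (hvu : v ≠ u) (hwu : w ≠ u) :
    (GofH H).Better u v w :=
  Or.inr ⟨hvu, hwu, hv, hw, hr⟩

lemma delta_eq (M M' : (GofH H).Matching) (S : Finset (GV n))
    (h : ∀ u, u ∉ S → M'.m u = M.m u) :
    (GofH H).delta M M' =
      ∑ u ∈ S, ((if (GofH H).Prefers M M' u then (1:ℤ) else 0)
        - (if (GofH H).Prefers M' M u then (1:ℤ) else 0)) := by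
  have key : ∀ N N' : (GofH H).Matching,
      ((GofH H).phi N N' : ℤ) = ∑ u ∈ (Finset.univ : Finset (GV n)),
        (if (GofH H).Prefers N N' u then (1:ℤ) else 0) := by
    intro N N'
    rw [RoommatesInstance.phi, Finset.card_filter]
    push_cast
    rfl
  rw [RoommatesInstance.delta, key, key, ← Finset.sum_sub_distrib]
  refine (Finset.sum_subset (Finset.subset_univ S) ?_).symm
  intro x _ hx
  have hx' := h x hx
  simp only [RoommatesInstance.Prefers, hx', better_irrefl, if_false, sub_zero]

lemma term_neg (M M' : (GofH H).Matching) {u : GV n}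
    (h : (GofH H).Better u (M'.m u) (M.m u)) :
    (if (GofH H).Prefers M M' u then (1:ℤ) else 0)
      - (if (GofH H).Prefers M' M u then (1:ℤ) else 0) = -1 := by
  rw [if_pos (show (GofH H).Prefers M' M u from h),
      if_neg (show ¬ (GofH H).Prefers M M' u from better_asymm h)]
  norm_num

lemma term_pos (M M' : (GofH H).Matching) {u : GV n}
    (h : (GofH H).Better u (M.m u) (M'.m u)) :
    (if (GofH H).Prefers M M' u then (1:ℤ) else 0)
      - (if (GofH H).Prefers M' M u then (1:ℤ) else 0) = 1 := by
  rw [if_pos (show (GofH H).Prefers M M' u from h),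
      if_neg (show ¬ (GofH H).Prefers M' M u from better_asymm h)]
  norm_num

def patch (M : (GofH H).Matching) (S : Finset (GV n)) (σ : GV n → GV n)
    (h1 : ∀ x ∈ S, σ x ∈ S)
    (h2 : ∀ x ∈ S, σ (σ x) = x)
    (h3 : ∀ x ∈ S, σ x ≠ x → (GofH H).adj x (σ x))
    (h4 : ∀ x ∈ S, M.m x ∈ S) : (GofH H).Matching where
  m x := if x ∈ S then σ x else M.m x
  invol x := by
    by_cases hx : x ∈ S
    · rw [if_pos hx, if_pos (h1 x hx), h2 x hx]
    · have hmx : M.m x ∉ S := fun hm => hx (by rw [← M.invol x]; exact h4 _ hm)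
      rw [if_neg hx, if_neg hmx, M.invol]
  adj_of_ne x hne := by
    by_cases hx : x ∈ S
    · rw [if_pos hx] at hne ⊢
      exact h3 x hx hne
    · have hmx : M.m x ∉ S := fun hm => hx (by rw [← M.invol x]; exact h4 _ hm)
      rw [if_neg hx] at hne ⊢
      exact M.adj_of_ne x hne

lemma patch_m (M : (GofH H).Matching) (S : Finset (GV n)) (σ : GV n → GV n)
    (h1 h2 h3 h4) (x : GV n) :
    (patch M S σ h1 h2 h3 h4).m x = if x ∈ S then σ x else M.m x := rfl

end Helpers

section Adjacency

open RoommatesInstance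

variable {n : ℕ} {H : SimpleGraph (Fin n)}

lemma adjAB (i : Fin n) : (GofH H).adj (GV.A i) (GV.B i) :=
  ⟨fun h => (by cases h), Or.inl (Or.inl ⟨i, rfl, Or.inl rfl⟩)⟩

lemma adjAC (i : Fin n) : (GofH H).adj (GV.A i) (GV.C i) :=
  ⟨fun h => (by cases h), Or.inl (Or.inl ⟨i, rfl, Or.inr (Or.inl rfl)⟩)⟩

lemma adjAD (i : Fin n) : (GofH H).adj (GV.A i) (GV.D i) :=
  ⟨fun h => (by cases h), Or.inl (Or.inl ⟨i, rfl, Or.inr (Or.inr rfl)⟩)⟩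

lemma adjBC (i : Fin n) : (GofH H).adj (GV.B i) (GV.C i) :=
  ⟨fun h => (by cases h), Or.inl (Or.inr (Or.inl ⟨i, rfl, rfl⟩))⟩

lemma adjBU {i j : Fin n} (h : H.Adj i j) : (GofH H).adj (GV.B i) (GV.U i j) :=
  ⟨fun h => (by cases h), Or.inl (Or.inr (Or.inr (Or.inl ⟨i, j, rfl, rfl, h⟩)))⟩

lemma adjUU {i j : Fin n} (h : H.Adj i j) : (GofH H).adj (GV.U i j) (GV.U j i) :=
  ⟨fun he => h.ne (by injection he), Or.inl (Or.inr (Or.inr (Or.inr ⟨i, j, rfl, rfl, h⟩)))⟩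

lemma adjA_cases {i : Fin n} {y : GV n} (h : (GofH H).adj (GV.A i) y) :
    y = GV.B i ∨ y = GV.C i ∨ y = GV.D i := by
  obtain ⟨-, h | h⟩ := h <;> simp only [grel] at h <;> aesop

lemma adjB_cases {i : Fin n} {y : GV n} (h : (GofH H).adj (GV.B i) y) :
    y = GV.A i ∨ y = GV.C i ∨ ∃ k, y = GV.U i k ∧ H.Adj i k := by
  obtain ⟨-, h | h⟩ := h <;> simp only [grel] at h <;> aesop

lemma adjC_cases {i : Fin n} {y : GV n} (h : (GofH H).adj (GV.C i) y) :
    y = GV.A i ∨ y = GV.B i := by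
  obtain ⟨-, h | h⟩ := h <;> simp only [grel] at h <;> aesop

lemma adjD_cases {i : Fin n} {y : GV n} (h : (GofH H).adj (GV.D i) y) :
    y = GV.A i := by
  obtain ⟨-, h | h⟩ := h <;> simp only [grel] at h <;> aesop

lemma adjU_cases {i j : Fin n} {y : GV n} (h : (GofH H).adj (GV.U i j) y) :
    H.Adj i j ∧ (y = GV.U j i ∨ y = GV.B i) := by
  obtain ⟨-, h | h⟩ := h <;> simp only [grel] at h
  · rcases h with ⟨i', hx, -⟩ | ⟨i', hx, -⟩ | ⟨i', j', hx, -⟩ | ⟨i', j', hx, hy, ha⟩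
    · exact absurd hx (by simp)
    · exact absurd hx (by simp)
    · exact absurd hx (by simp)
    · obtain ⟨rfl, rfl⟩ : i' = i ∧ j' = j := by
        injection hx with h1 h2; exact ⟨h1.symm, h2.symm⟩
      exact ⟨ha, Or.inl hy⟩
  · rcases h with ⟨i', hx, hy⟩ | ⟨i', hx, hy⟩ | ⟨i', j', hy, hx, ha⟩ | ⟨i', j', hy, hx, ha⟩
    · rcases hy with hy | hy | hy <;> exact absurd hy (by simp)
    · exact absurd hy (by simp)
    · obtain ⟨rfl, rfl⟩ : i' = i ∧ j' = j := by
        injection hx with h1 h2; exact ⟨h1.symm, h2.symm⟩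
      exact ⟨ha, Or.inr hy⟩
    · obtain ⟨rfl, rfl⟩ : j' = i ∧ i' = j := by
        injection hx with h1 h2; exact ⟨h1.symm, h2.symm⟩
      exact ⟨ha.symm, Or.inl hy⟩

variable (M : (GofH H).Matching)

lemma A_partner (i : Fin n) : M.m (GV.A i) = GV.A i ∨ M.m (GV.A i) = GV.B i ∨
    M.m (GV.A i) = GV.C i ∨ M.m (GV.A i) = GV.D i := by
  by_cases h : M.m (GV.A i) = GV.A i
  · exact Or.inl h
  · exact Or.inr (adjA_cases (M.adj_of_ne _ h))

lemma B_partner (i : Fin n) : M.m (GV.B i) = GV.B i ∨ M.m (GV.B i) = GV.A i ∨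
    M.m (GV.B i) = GV.C i ∨ ∃ k, M.m (GV.B i) = GV.U i k ∧ H.Adj i k := by
  by_cases h : M.m (GV.B i) = GV.B i
  · exact Or.inl h
  · exact Or.inr (adjB_cases (M.adj_of_ne _ h))

lemma C_partner (i : Fin n) : M.m (GV.C i) = GV.C i ∨ M.m (GV.C i) = GV.A i ∨
    M.m (GV.C i) = GV.B i := by
  by_cases h : M.m (GV.C i) = GV.C i
  · exact Or.inl h
  · exact Or.inr (adjC_cases (M.adj_of_ne _ h))

lemma U_partner (i j : Fin n) : M.m (GV.U i j) = GV.U i j ∨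
    M.m (GV.U i j) = GV.U j i ∨ M.m (GV.U i j) = GV.B i := by
  by_cases h : M.m (GV.U i j) = GV.U i j
  · exact Or.inl h
  · exact Or.inr (adjU_cases (M.adj_of_ne _ h)).2

-- concrete preference facts
lemma bABC (i : Fin n) : (GofH H).Better (GV.A i) (GV.B i) (GV.C i) :=
  mkBetter (adjAB i) (adjAC i) (by show 0 < 1; omega) (by simp) (by simp)

lemma bABD (i : Fin n) : (GofH H).Better (GV.A i) (GV.B i) (GV.D i) :=
  mkBetter (adjAB i) (adjAD i) (by show 0 < 2; omega) (by simp) (by simp)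

lemma bACD (i : Fin n) : (GofH H).Better (GV.A i) (GV.C i) (GV.D i) :=
  mkBetter (adjAC i) (adjAD i) (by show 1 < 2; omega) (by simp) (by simp)

lemma bBAC (i : Fin n) : (GofH H).Better (GV.B i) (GV.A i) (GV.C i) :=
  mkBetter ((GofH H).adj_symm _ _ (adjAB i)) (adjBC i) (by show 0 < 1 + n; omega)
    (by simp) (by simp)

lemma bBAU {i k : Fin n} (h : H.Adj i k) :
    (GofH H).Better (GV.B i) (GV.A i) (GV.U i k) :=
  mkBetter ((GofH H).adj_symm _ _ (adjAB i)) (adjBU h) (by show 0 < 1 + k.val; omega)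
    (by simp) (by simp)

lemma bBUC {i k : Fin n} (h : H.Adj i k) :
    (GofH H).Better (GV.B i) (GV.U i k) (GV.C i) :=
  mkBetter (adjBU h) (adjBC i)
    (by show 1 + k.val < 1 + n; have := k.isLt; omega) (by simp) (by simp)

lemma bCAB (i : Fin n) : (GofH H).Better (GV.C i) (GV.A i) (GV.B i) :=
  mkBetter ((GofH H).adj_symm _ _ (adjAC i)) ((GofH H).adj_symm _ _ (adjBC i))
    (by show 0 < 1; omega) (by simp) (by simp)

lemma bUUB {i k : Fin n} (h : H.Adj i k) :
    (GofH H).Better (GV.U i k) (GV.U k i) (GV.B i) :=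
  mkBetter (adjUU h) ((GofH H).adj_symm _ _ (adjBU h)) (by show 0 < 1; omega)
    (by simp [h.ne']) (by simp)

end Adjacency

section Cases

open RoommatesInstance

variable {n : ℕ} {H : SimpleGraph (Fin n)} {M : (GofH H).Matching}

lemma A_matched (hM : (GofH H).Popular M) (i : Fin n) : M.m (GV.A i) ≠ GV.A i := by
  intro hA
  have hD : M.m (GV.D i) = GV.D i := by
    by_contra h
    have h1 := adjD_cases (M.adj_of_ne _ h)
    have h2 := M.invol (GV.D i)
    rw [h1, hA] at h2
    cases h2
  set S : Finset (GV n) := {GV.A i, GV.D i} with hS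
  set σ : GV n → GV n := fun x =>
    if x = GV.A i then GV.D i else if x = GV.D i then GV.A i else x with hσ
  have hσA : σ (GV.A i) = GV.D i := by simp [hσ]
  have hσD : σ (GV.D i) = GV.A i := by simp [hσ]
  have hmem : ∀ x ∈ S, x = GV.A i ∨ x = GV.D i := by
    intro x hx; simpa [hS] using hx
  set M' := patch M S σ
    (by rintro x hx; rcases hmem x hx with rfl | rfl <;> simp [hσA, hσD, hS])
    (by rintro x hx; rcases hmem x hx with rfl | rfl <;> simp [hσA, hσD])
    (by rintro x hx; rcases hmem x hx with rfl | rfl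
        · rw [hσA]; intro; exact adjAD i
        · rw [hσD]; intro; exact (GofH H).adj_symm _ _ (adjAD i))
    (by rintro x hx; rcases hmem x hx with rfl | rfl
        · rw [hA]; simp [hS]
        · rw [hD]; simp [hS]) with hM'
  have hmA : M'.m (GV.A i) = GV.D i := by
    rw [hM', patch_m, if_pos (by simp [hS]), hσA]
  have hmD : M'.m (GV.D i) = GV.A i := by
    rw [hM', patch_m, if_pos (by simp [hS]), hσD]
  have h0 := hM M'
  rw [delta_eq M M' S (fun u hu => by rw [hM', patch_m, if_neg hu]), hS,
    Finset.sum_insert (by simp), Finset.sum_singleton,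
    term_neg M M' (by rw [hmA, hA]; exact better_unmatched (by simp)),
    term_neg M M' (by rw [hmD, hD]; exact better_unmatched (by simp))] at h0
  norm_num at h0


lemma AD_forces_BC (hM : (GofH H).Popular M) (i : Fin n)
    (hA : M.m (GV.A i) = GV.D i) : M.m (GV.B i) = GV.C i := by
  by_contra hB
  have hD : M.m (GV.D i) = GV.A i := by rw [← hA, M.invol]
  have hC : M.m (GV.C i) = GV.C i := by
    rcases C_partner M i with h | h | h
    · exact h
    · have h2 := M.invol (GV.C i)
      rw [h, hA] at h2
      exact absurd h2 (by simp)
    · have h2 := M.invol (GV.C i)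
      rw [h] at h2
      exact absurd h2 hB
  set S : Finset (GV n) := {GV.A i, GV.C i, GV.D i} with hS
  set σ : GV n → GV n := fun x =>
    if x = GV.A i then GV.C i else if x = GV.C i then GV.A i else x with hσ
  have hσA : σ (GV.A i) = GV.C i := by simp [hσ]
  have hσC : σ (GV.C i) = GV.A i := by simp [hσ]
  have hσD : σ (GV.D i) = GV.D i := by simp [hσ]
  have hmem : ∀ x ∈ S, x = GV.A i ∨ x = GV.C i ∨ x = GV.D i := by
    intro x hx; simpa [hS] using hx
  set M' := patch M S σ
    (by rintro x hx; rcases hmem x hx with rfl | rfl | rfl <;>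
          simp [hσA, hσC, hσD, hS])
    (by rintro x hx; rcases hmem x hx with rfl | rfl | rfl <;>
          simp [hσA, hσC, hσD])
    (by rintro x hx; rcases hmem x hx with rfl | rfl | rfl
        · rw [hσA]; intro; exact adjAC i
        · rw [hσC]; intro; exact (GofH H).adj_symm _ _ (adjAC i)
        · rw [hσD]; intro h; exact absurd rfl h)
    (by rintro x hx; rcases hmem x hx with rfl | rfl | rfl
        · rw [hA]; simp [hS]
        · rw [hC]; simp [hS]
        · rw [hD]; simp [hS]) with hM'
  have hmA : M'.m (GV.A i) = GV.C i := by
    rw [hM', patch_m, if_pos (by simp [hS]), hσA]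
  have hmC : M'.m (GV.C i) = GV.A i := by
    rw [hM', patch_m, if_pos (by simp [hS]), hσC]
  have hmD : M'.m (GV.D i) = GV.D i := by
    rw [hM', patch_m, if_pos (by simp [hS]), hσD]
  have h0 := hM M'
  rw [delta_eq M M' S (fun u hu => by rw [hM', patch_m, if_neg hu]), hS,
    Finset.sum_insert (by simp), Finset.sum_insert (by simp), Finset.sum_singleton,
    term_neg M M' (by rw [hmA, hA]; exact bACD i),
    term_neg M M' (by rw [hmC, hC]; exact better_unmatched (by simp)),
    term_pos M M' (by rw [hmD, hD]; exact better_unmatched (by simp))] at h0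
  norm_num at h0

lemma notAC (hM : (GofH H).Popular M) (i : Fin n) : M.m (GV.A i) ≠ GV.C i := by
  intro hA
  have hC : M.m (GV.C i) = GV.A i := by rw [← hA, M.invol]
  rcases B_partner M i with hB | hB | hB | ⟨k, hB, hadj⟩
  · -- case 3 : b_i unmatched
    set S : Finset (GV n) := {GV.A i, GV.B i, GV.C i} with hS
    set σ : GV n → GV n := fun x =>
      if x = GV.A i then GV.B i else if x = GV.B i then GV.A i else x with hσ
    have hσA : σ (GV.A i) = GV.B i := by simp [hσ]
    have hσB : σ (GV.B i) = GV.A i := by simp [hσ]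
    have hσC : σ (GV.C i) = GV.C i := by simp [hσ]
    have hmem : ∀ x ∈ S, x = GV.A i ∨ x = GV.B i ∨ x = GV.C i := by
      intro x hx; simpa [hS] using hx
    set M' := patch M S σ
      (by rintro x hx; rcases hmem x hx with rfl | rfl | rfl <;>
            simp [hσA, hσB, hσC, hS])
      (by rintro x hx; rcases hmem x hx with rfl | rfl | rfl <;>
            simp [hσA, hσB, hσC])
      (by rintro x hx; rcases hmem x hx with rfl | rfl | rfl
          · rw [hσA]; intro; exact adjAB i
          · rw [hσB]; intro; exact (GofH H).adj_symm _ _ (adjAB i)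
          · rw [hσC]; intro h; exact absurd rfl h)
      (by rintro x hx; rcases hmem x hx with rfl | rfl | rfl
          · rw [hA]; simp [hS]
          · rw [hB]; simp [hS]
          · rw [hC]; simp [hS]) with hM'
    have hmA : M'.m (GV.A i) = GV.B i := by
      rw [hM', patch_m, if_pos (by simp [hS]), hσA]
    have hmB : M'.m (GV.B i) = GV.A i := by
      rw [hM', patch_m, if_pos (by simp [hS]), hσB]
    have hmC : M'.m (GV.C i) = GV.C i := by
      rw [hM', patch_m, if_pos (by simp [hS]), hσC]
    have h0 := hM M'
    rw [delta_eq M M' S (fun u hu => by rw [hM', patch_m, if_neg hu]), hS,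
      Finset.sum_insert (by simp), Finset.sum_insert (by simp), Finset.sum_singleton,
      term_neg M M' (by rw [hmA, hA]; exact bABC i),
      term_neg M M' (by rw [hmB, hB]; exact better_unmatched (by simp)),
      term_pos M M' (by rw [hmC, hC]; exact better_unmatched (by simp))] at h0
    norm_num at h0
  · -- b_i matched to a_i : contradiction with hA
    have h2 := M.invol (GV.B i)
    rw [hB, hA] at h2
    exact absurd h2 (by simp)
  · -- b_i matched to c_i : contradiction with hC
    have h2 := M.invol (GV.B i)
    rw [hB, hC] at h2
    exact absurd h2 (by simp)
  · -- b_i matched to u^f_i where f = (i,k)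
    have hik : i ≠ k := hadj.ne
    have hU : M.m (GV.U i k) = GV.B i := by rw [← hB, M.invol]
    rcases U_partner M k i with hUk | hUk | hUk
    · -- case 4 : u^f_k unmatched
      set S : Finset (GV n) := {GV.A i, GV.B i, GV.C i, GV.U i k, GV.U k i} with hS
      set σ : GV n → GV n := fun x =>
        if x = GV.A i then GV.B i else if x = GV.B i then GV.A i else
        if x = GV.U i k then GV.U k i else if x = GV.U k i then GV.U i k else x with hσ
      have hσA : σ (GV.A i) = GV.B i := by simp [hσ]
      have hσB : σ (GV.B i) = GV.A i := by simp [hσ]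
      have hσC : σ (GV.C i) = GV.C i := by simp [hσ]
      have hσU1 : σ (GV.U i k) = GV.U k i := by simp [hσ]
      have hσU2 : σ (GV.U k i) = GV.U i k := by simp [hσ, hik, hik.symm]
      have hmem : ∀ x ∈ S, x = GV.A i ∨ x = GV.B i ∨ x = GV.C i ∨
          x = GV.U i k ∨ x = GV.U k i := by
        intro x hx; simpa [hS] using hx
      set M' := patch M S σ
        (by rintro x hx; rcases hmem x hx with rfl | rfl | rfl | rfl | rfl <;>
              simp [hσA, hσB, hσC, hσU1, hσU2, hS])
        (by rintro x hx; rcases hmem x hx with rfl | rfl | rfl | rfl | rfl <;>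
              simp [hσA, hσB, hσC, hσU1, hσU2])
        (by rintro x hx; rcases hmem x hx with rfl | rfl | rfl | rfl | rfl
            · rw [hσA]; intro; exact adjAB i
            · rw [hσB]; intro; exact (GofH H).adj_symm _ _ (adjAB i)
            · rw [hσC]; intro h; exact absurd rfl h
            · rw [hσU1]; intro; exact adjUU hadj
            · rw [hσU2]; intro; exact (GofH H).adj_symm _ _ (adjUU hadj))
        (by rintro x hx; rcases hmem x hx with rfl | rfl | rfl | rfl | rfl
            · rw [hA]; simp [hS]
            · rw [hB]; simp [hS]
            · rw [hC]; simp [hS]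
            · rw [hU]; simp [hS]
            · rw [hUk]; simp [hS]) with hM'
      have hmA : M'.m (GV.A i) = GV.B i := by
        rw [hM', patch_m, if_pos (by simp [hS]), hσA]
      have hmB : M'.m (GV.B i) = GV.A i := by
        rw [hM', patch_m, if_pos (by simp [hS]), hσB]
      have hmC : M'.m (GV.C i) = GV.C i := by
        rw [hM', patch_m, if_pos (by simp [hS]), hσC]
      have hmU1 : M'.m (GV.U i k) = GV.U k i := by
        rw [hM', patch_m, if_pos (by simp [hS]), hσU1]
      have hmU2 : M'.m (GV.U k i) = GV.U i k := by
        rw [hM', patch_m, if_pos (by simp [hS]), hσU2]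
      have h0 := hM M'
      rw [delta_eq M M' S (fun u hu => by rw [hM', patch_m, if_neg hu]), hS,
        Finset.sum_insert (by simp), Finset.sum_insert (by simp),
        Finset.sum_insert (by simp), Finset.sum_insert (by simp [hik]),
        Finset.sum_singleton,
        term_neg M M' (by rw [hmA, hA]; exact bABC i),
        term_neg M M' (by rw [hmB, hB]; exact bBAU hadj),
        term_pos M M' (by rw [hmC, hC]; exact better_unmatched (by simp)),
        term_neg M M' (by rw [hmU1, hU]; exact bUUB hadj),
        term_neg M M' (by rw [hmU2, hUk]; exact better_unmatched (by simp [hik]))] at h0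
      norm_num at h0
    · -- u^f_k matched to u^f_i : impossible since u^f_i is matched to b_i
      have h2 := M.invol (GV.U k i)
      rw [hUk, hU] at h2
      exact absurd h2 (by simp [hik])
    · -- case 5 : u^f_k matched to b_k
      have hBk : M.m (GV.B k) = GV.U k i := by rw [← hUk, M.invol]
      have hAk : M.m (GV.A k) = GV.C k := by
        rcases A_partner M k with h | h | h | h
        · exact absurd h (A_matched hM k)
        · have h2 := M.invol (GV.A k)
          rw [h, hBk] at h2
          exact absurd h2 (by simp)
        · exact h
        · have := AD_forces_BC hM k h
          rw [hBk] at this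
          exact absurd this (by simp)
      have hCk : M.m (GV.C k) = GV.A k := by rw [← hAk, M.invol]
      set S : Finset (GV n) := {GV.A i, GV.B i, GV.C i, GV.U i k, GV.U k i,
        GV.A k, GV.B k, GV.C k} with hS
      set σ : GV n → GV n := fun x =>
        if x = GV.A i then GV.B i else if x = GV.B i then GV.A i else
        if x = GV.A k then GV.B k else if x = GV.B k then GV.A k else
        if x = GV.U i k then GV.U k i else if x = GV.U k i then GV.U i k else x with hσ
      have hσ1 : σ (GV.A i) = GV.B i := by simp [hσ]
      have hσ2 : σ (GV.B i) = GV.A i := by simp [hσ]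
      have hσ3 : σ (GV.C i) = GV.C i := by simp [hσ]
      have hσ4 : σ (GV.U i k) = GV.U k i := by simp [hσ]
      have hσ5 : σ (GV.U k i) = GV.U i k := by simp [hσ, hik, hik.symm]
      have hσ6 : σ (GV.A k) = GV.B k := by simp [hσ, hik, hik.symm]
      have hσ7 : σ (GV.B k) = GV.A k := by simp [hσ, hik, hik.symm]
      have hσ8 : σ (GV.C k) = GV.C k := by simp [hσ]
      have hmem : ∀ x ∈ S, x = GV.A i ∨ x = GV.B i ∨ x = GV.C i ∨
          x = GV.U i k ∨ x = GV.U k i ∨ x = GV.A k ∨ x = GV.B k ∨ x = GV.C k := by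
        intro x hx; simpa [hS] using hx
      set M' := patch M S σ
        (by rintro x hx
            rcases hmem x hx with rfl | rfl | rfl | rfl | rfl | rfl | rfl | rfl <;>
              simp [hσ1, hσ2, hσ3, hσ4, hσ5, hσ6, hσ7, hσ8, hS])
        (by rintro x hx
            rcases hmem x hx with rfl | rfl | rfl | rfl | rfl | rfl | rfl | rfl <;>
              simp [hσ1, hσ2, hσ3, hσ4, hσ5, hσ6, hσ7, hσ8])
        (by rintro x hx
            rcases hmem x hx with rfl | rfl | rfl | rfl | rfl | rfl | rfl | rfl
            · rw [hσ1]; intro; exact adjAB i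
            · rw [hσ2]; intro; exact (GofH H).adj_symm _ _ (adjAB i)
            · rw [hσ3]; intro h; exact absurd rfl h
            · rw [hσ4]; intro; exact adjUU hadj
            · rw [hσ5]; intro; exact (GofH H).adj_symm _ _ (adjUU hadj)
            · rw [hσ6]; intro; exact adjAB k
            · rw [hσ7]; intro; exact (GofH H).adj_symm _ _ (adjAB k)
            · rw [hσ8]; intro h; exact absurd rfl h)
        (by rintro x hx
            rcases hmem x hx with rfl | rfl | rfl | rfl | rfl | rfl | rfl | rfl
            · rw [hA]; simp [hS]
            · rw [hB]; simp [hS]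
            · rw [hC]; simp [hS]
            · rw [hU]; simp [hS]
            · rw [hUk]; simp [hS]
            · rw [hAk]; simp [hS]
            · rw [hBk]; simp [hS]
            · rw [hCk]; simp [hS]) with hM'
      have hm1 : M'.m (GV.A i) = GV.B i := by
        rw [hM', patch_m, if_pos (by simp [hS]), hσ1]
      have hm2 : M'.m (GV.B i) = GV.A i := by
        rw [hM', patch_m, if_pos (by simp [hS]), hσ2]
      have hm3 : M'.m (GV.C i) = GV.C i := by
        rw [hM', patch_m, if_pos (by simp [hS]), hσ3]
      have hm4 : M'.m (GV.U i k) = GV.U k i := by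
        rw [hM', patch_m, if_pos (by simp [hS]), hσ4]
      have hm5 : M'.m (GV.U k i) = GV.U i k := by
        rw [hM', patch_m, if_pos (by simp [hS]), hσ5]
      have hm6 : M'.m (GV.A k) = GV.B k := by
        rw [hM', patch_m, if_pos (by simp [hS]), hσ6]
      have hm7 : M'.m (GV.B k) = GV.A k := by
        rw [hM', patch_m, if_pos (by simp [hS]), hσ7]
      have hm8 : M'.m (GV.C k) = GV.C k := by
        rw [hM', patch_m, if_pos (by simp [hS]), hσ8]
      have h0 := hM M'
      rw [delta_eq M M' S (fun u hu => by rw [hM', patch_m, if_neg hu]), hS,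
        Finset.sum_insert (by simp [hik]), Finset.sum_insert (by simp [hik]),
        Finset.sum_insert (by simp [hik]), Finset.sum_insert (by simp [hik]),
        Finset.sum_insert (by simp [hik]), Finset.sum_insert (by simp [hik]),
        Finset.sum_insert (by simp [hik]), Finset.sum_singleton,
        term_neg M M' (by rw [hm1, hA]; exact bABC i),
        term_neg M M' (by rw [hm2, hB]; exact bBAU hadj),
        term_pos M M' (by rw [hm3, hC]; exact better_unmatched (by simp)),
        term_neg M M' (by rw [hm4, hU]; exact bUUB hadj),
        term_neg M M' (by rw [hm5, hUk]; exact bUUB hadj.symm),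
        term_neg M M' (by rw [hm6, hAk]; exact bABC k),
        term_neg M M' (by rw [hm7, hBk]; exact bBAU hadj.symm),
        term_pos M M' (by rw [hm8, hCk]; exact better_unmatched (by simp))] at h0
      norm_num at h0


lemma gadget_state (hM : (GofH H).Popular M) (i : Fin n)
    (h : M.m (GV.A i) ≠ GV.B i) :
    M.m (GV.A i) = GV.D i ∧ M.m (GV.B i) = GV.C i := by
  have hAD : M.m (GV.A i) = GV.D i := by
    rcases A_partner M i with h' | h' | h' | h'
    · exact absurd h' (A_matched hM i)
    · exact absurd h' h
    · exact absurd h' (notAC hM i)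
    · exact h'
  exact ⟨hAD, AD_forces_BC hM i hAD⟩

theorem popular_gives_vertex_cover' {n : ℕ} (H : SimpleGraph (Fin n))
    (M : (GofH H).Matching) (hM : (GofH H).Popular M) :
    ∀ i j, H.Adj i j → M.m (GV.A i) = GV.B i ∨ M.m (GV.A j) = GV.B j := by
  intro i j hadj
  by_contra hcon
  push_neg at hcon
  obtain ⟨hi, hj⟩ := hcon
  have hij : i ≠ j := hadj.ne
  obtain ⟨hAi, hBi⟩ := gadget_state hM i hi
  obtain ⟨hAj, hBj⟩ := gadget_state hM j hj
  have hCi : M.m (GV.C i) = GV.B i := by rw [← hBi, M.invol]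
  have hCj : M.m (GV.C j) = GV.B j := by rw [← hBj, M.invol]
  have hDi : M.m (GV.D i) = GV.A i := by rw [← hAi, M.invol]
  have hDj : M.m (GV.D j) = GV.A j := by rw [← hAj, M.invol]
  -- partner of U i j
  have hUi : M.m (GV.U i j) = GV.U i j ∨ M.m (GV.U i j) = GV.U j i := by
    rcases U_partner M i j with h | h | h
    · exact Or.inl h
    · exact Or.inr h
    · have h2 := M.invol (GV.U i j)
      rw [h, hBi] at h2
      exact absurd h2 (by simp)
  have hUj : M.m (GV.U j i) = GV.U j i ∨ M.m (GV.U j i) = GV.U i j := by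
    rcases U_partner M j i with h | h | h
    · exact Or.inl h
    · exact Or.inr h
    · have h2 := M.invol (GV.U j i)
      rw [h, hBj] at h2
      exact absurd h2 (by simp)
  have hUcase : (M.m (GV.U i j) = GV.U i j ∧ M.m (GV.U j i) = GV.U j i) ∨
      M.m (GV.U i j) = GV.U j i := by
    rcases hUi with h1 | h1
    · rcases hUj with h2 | h2
      · exact Or.inl ⟨h1, h2⟩
      · have h3 := M.invol (GV.U j i)
        rw [h2, h1] at h3
        exact absurd h3 (by simp [hij])
    · exact Or.inr h1
  rcases hUcase with ⟨hU1, hU2⟩ | hU1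
  · -- case 6 : both u's unmatched
    set S : Finset (GV n) := {GV.U i j, GV.U j i} with hS
    set σ : GV n → GV n := fun x =>
      if x = GV.U i j then GV.U j i else if x = GV.U j i then GV.U i j else x with hσ
    have hσ1 : σ (GV.U i j) = GV.U j i := by simp [hσ]
    have hσ2 : σ (GV.U j i) = GV.U i j := by simp [hσ, hij, hij.symm]
    have hmem : ∀ x ∈ S, x = GV.U i j ∨ x = GV.U j i := by
      intro x hx; simpa [hS] using hx
    set M' := patch M S σ
      (by rintro x hx; rcases hmem x hx with rfl | rfl <;> simp [hσ1, hσ2, hS])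
      (by rintro x hx; rcases hmem x hx with rfl | rfl <;> simp [hσ1, hσ2])
      (by rintro x hx; rcases hmem x hx with rfl | rfl
          · rw [hσ1]; intro; exact adjUU hadj
          · rw [hσ2]; intro; exact (GofH H).adj_symm _ _ (adjUU hadj))
      (by rintro x hx; rcases hmem x hx with rfl | rfl
          · rw [hU1]; simp [hS]
          · rw [hU2]; simp [hS]) with hM'
    have hm1 : M'.m (GV.U i j) = GV.U j i := by
      rw [hM', patch_m, if_pos (by simp [hS]), hσ1]
    have hm2 : M'.m (GV.U j i) = GV.U i j := by
      rw [hM', patch_m, if_pos (by simp [hS]), hσ2]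
    have h0 := hM M'
    rw [delta_eq M M' S (fun u hu => by rw [hM', patch_m, if_neg hu]), hS,
      Finset.sum_insert (by simp [hij]), Finset.sum_singleton,
      term_neg M M' (by rw [hm1, hU1]; exact better_unmatched (by simp [hij])),
      term_neg M M' (by rw [hm2, hU2]; exact better_unmatched (by simp [hij]))] at h0
    norm_num at h0
  · -- case 7 : u^e_i matched to u^e_j
    have hU2 : M.m (GV.U j i) = GV.U i j := by rw [← hU1, M.invol]
    set S : Finset (GV n) := {GV.A i, GV.B i, GV.C i, GV.D i, GV.U i j,
      GV.A j, GV.B j, GV.C j, GV.D j, GV.U j i} with hS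
    set σ : GV n → GV n := fun x =>
      if x = GV.A i then GV.C i else if x = GV.C i then GV.A i else
      if x = GV.B i then GV.U i j else if x = GV.U i j then GV.B i else
      if x = GV.A j then GV.C j else if x = GV.C j then GV.A j else
      if x = GV.B j then GV.U j i else if x = GV.U j i then GV.B j else x with hσ
    have hσ1 : σ (GV.A i) = GV.C i := by simp [hσ]
    have hσ2 : σ (GV.B i) = GV.U i j := by simp [hσ]
    have hσ3 : σ (GV.C i) = GV.A i := by simp [hσ]
    have hσ4 : σ (GV.D i) = GV.D i := by simp [hσ]
    have hσ5 : σ (GV.U i j) = GV.B i := by simp [hσ]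
    have hσ6 : σ (GV.A j) = GV.C j := by simp [hσ, hij, hij.symm]
    have hσ7 : σ (GV.B j) = GV.U j i := by simp [hσ, hij, hij.symm]
    have hσ8 : σ (GV.C j) = GV.A j := by simp [hσ, hij, hij.symm]
    have hσ9 : σ (GV.D j) = GV.D j := by simp [hσ]
    have hσ10 : σ (GV.U j i) = GV.B j := by simp [hσ, hij, hij.symm]
    have hmem : ∀ x ∈ S, x = GV.A i ∨ x = GV.B i ∨ x = GV.C i ∨ x = GV.D i ∨
        x = GV.U i j ∨ x = GV.A j ∨ x = GV.B j ∨ x = GV.C j ∨ x = GV.D j ∨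
        x = GV.U j i := by
      intro x hx; simpa [hS] using hx
    set M' := patch M S σ
      (by rintro x hx
          rcases hmem x hx with rfl|rfl|rfl|rfl|rfl|rfl|rfl|rfl|rfl|rfl <;>
            simp [hσ1, hσ2, hσ3, hσ4, hσ5, hσ6, hσ7, hσ8, hσ9, hσ10, hS])
      (by rintro x hx
          rcases hmem x hx with rfl|rfl|rfl|rfl|rfl|rfl|rfl|rfl|rfl|rfl <;>
            simp [hσ1, hσ2, hσ3, hσ4, hσ5, hσ6, hσ7, hσ8, hσ9, hσ10])
      (by rintro x hx
          rcases hmem x hx with rfl|rfl|rfl|rfl|rfl|rfl|rfl|rfl|rfl|rfl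
          · rw [hσ1]; intro; exact adjAC i
          · rw [hσ2]; intro; exact adjBU hadj
          · rw [hσ3]; intro; exact (GofH H).adj_symm _ _ (adjAC i)
          · rw [hσ4]; intro h; exact absurd rfl h
          · rw [hσ5]; intro; exact (GofH H).adj_symm _ _ (adjBU hadj)
          · rw [hσ6]; intro; exact adjAC j
          · rw [hσ7]; intro; exact adjBU hadj.symm
          · rw [hσ8]; intro; exact (GofH H).adj_symm _ _ (adjAC j)
          · rw [hσ9]; intro h; exact absurd rfl h
          · rw [hσ10]; intro; exact (GofH H).adj_symm _ _ (adjBU hadj.symm))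
      (by rintro x hx
          rcases hmem x hx with rfl|rfl|rfl|rfl|rfl|rfl|rfl|rfl|rfl|rfl
          · rw [hAi]; simp [hS]
          · rw [hBi]; simp [hS]
          · rw [hCi]; simp [hS]
          · rw [hDi]; simp [hS]
          · rw [hU1]; simp [hS]
          · rw [hAj]; simp [hS]
          · rw [hBj]; simp [hS]
          · rw [hCj]; simp [hS]
          · rw [hDj]; simp [hS]
          · rw [hU2]; simp [hS]) with hM'
    have hm1 : M'.m (GV.A i) = GV.C i := by
      rw [hM', patch_m, if_pos (by simp [hS]), hσ1]
    have hm2 : M'.m (GV.B i) = GV.U i j := by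
      rw [hM', patch_m, if_pos (by simp [hS]), hσ2]
    have hm3 : M'.m (GV.C i) = GV.A i := by
      rw [hM', patch_m, if_pos (by simp [hS]), hσ3]
    have hm4 : M'.m (GV.D i) = GV.D i := by
      rw [hM', patch_m, if_pos (by simp [hS]), hσ4]
    have hm5 : M'.m (GV.U i j) = GV.B i := by
      rw [hM', patch_m, if_pos (by simp [hS]), hσ5]
    have hm6 : M'.m (GV.A j) = GV.C j := by
      rw [hM', patch_m, if_pos (by simp [hS]), hσ6]
    have hm7 : M'.m (GV.B j) = GV.U j i := by
      rw [hM', patch_m, if_pos (by simp [hS]), hσ7]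
    have hm8 : M'.m (GV.C j) = GV.A j := by
      rw [hM', patch_m, if_pos (by simp [hS]), hσ8]
    have hm9 : M'.m (GV.D j) = GV.D j := by
      rw [hM', patch_m, if_pos (by simp [hS]), hσ9]
    have hm10 : M'.m (GV.U j i) = GV.B j := by
      rw [hM', patch_m, if_pos (by simp [hS]), hσ10]
    have h0 := hM M'
    rw [delta_eq M M' S (fun u hu => by rw [hM', patch_m, if_neg hu]), hS,
      Finset.sum_insert (by simp [hij]), Finset.sum_insert (by simp [hij]),
      Finset.sum_insert (by simp [hij]), Finset.sum_insert (by simp [hij]),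
      Finset.sum_insert (by simp [hij]), Finset.sum_insert (by simp [hij]),
      Finset.sum_insert (by simp [hij]), Finset.sum_insert (by simp [hij]),
      Finset.sum_insert (by simp [hij]), Finset.sum_singleton,
      term_neg M M' (by rw [hm1, hAi]; exact bACD i),
      term_neg M M' (by rw [hm2, hBi]; exact bBUC hadj),
      term_neg M M' (by rw [hm3, hCi]; exact bCAB i),
      term_pos M M' (by rw [hm4, hDi]; exact better_unmatched (by simp)),
      term_pos M M' (by rw [hm5, hU1]; exact bUUB hadj),
      term_neg M M' (by rw [hm6, hAj]; exact bACD j),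
      term_neg M M' (by rw [hm7, hBj]; exact bBUC hadj.symm),
      term_neg M M' (by rw [hm8, hCj]; exact bCAB j),
      term_pos M M' (by rw [hm9, hDj]; exact better_unmatched (by simp)),
      term_pos M M' (by rw [hm10, hU2]; exact bUUB hadj.symm)] at h0
    norm_num at h0

end Cases

open RoommatesInstance in
/-- For every popular matching `M` in `G`, the set
`C = {i : (a_i,b_i) ∈ M}` is a vertex cover of `H`. -/
theorem popular_gives_vertex_cover {n : ℕ} (H : SimpleGraph (Fin n))
    (M : (GofH H).Matching) (hM : (GofH H).Popular M) :
    ∀ i j, H.Adj i j → M.m (GV.A i) = GV.B i ∨ M.m (GV.A j) = GV.B j := by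
  exact popular_gives_vertex_cover' H M hM
end
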